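/- arXiv:2402.09903 — 5 statements merged into one kernel-verified Lean document; each statement's English description precedes it below -/
import Mathlib

section
/- For positive integers k and r with r ≤ k, and an integer s with 0 ≤ s ≤ r, the number of compositions of k into exactly r parts having exactly s parts equal to 1 is binom(r, s) · binom(k - r - 1, r - s - 1). -/
/-- Integer binomial coefficient `binom(a, b)`, equal to `0` when `b < 0` or
`b > a`, except for the convention `binom(-1, -1) = 1` used in the paper. -/
def ibinom (a b : ℤ) : ℤ :=
  if a = -1 ∧ b = -1 then 1
  else if 0 ≤ b ∧ b ≤ a then (a.toNat.choose b.toNat : ℤ)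
  else 0


/-- Functions `Fin r → ℕ` with sum `n` are equivalent to multisets of size `n` over `Fin r`. -/
def tupleSymEquiv (r n : ℕ) : {f : Fin r → ℕ // ∑ i, f i = n} ≃ Sym (Fin r) n where
  toFun f := ⟨∑ i, (f.1 i) • ({i} : Multiset (Fin r)), by
    rw [← Multiset.cardHom_apply, map_sum Multiset.cardHom]
    simp [f.2]⟩
  invFun m := ⟨fun i => m.1.count i, by
    have h2 : ∑ i : Fin r, Multiset.count i m.1
        = ∑ a ∈ m.1.toFinset, Multiset.count a m.1 :=
      (Finset.sum_subset (Finset.subset_univ _) (by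
        intro x _ hx
        simpa [Multiset.count_eq_zero] using hx)).symm
    rw [h2, Multiset.toFinset_sum_count_eq]
    exact m.2⟩
  left_inv f := by
    ext i
    simp [Multiset.count_sum', Multiset.count_nsmul, Multiset.count_singleton]
  right_inv m := by
    apply Subtype.ext
    show ∑ i, (Multiset.count i m.1) • ({i} : Multiset (Fin r)) = m.1
    have h1 : ∑ i : Fin r, (Multiset.count i m.1) • ({i} : Multiset (Fin r))
        = ∑ a ∈ m.1.toFinset, (Multiset.count a m.1) • ({a} : Multiset (Fin r)) :=
      (Finset.sum_subset (Finset.subset_univ _) (by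
        intro x _ hx
        show Multiset.count x m.1 • ({x} : Multiset (Fin r)) = 0
        rw [Multiset.count_eq_zero.2 (Multiset.mem_toFinset.not.1 hx), zero_smul])).symm
    rw [h1, Multiset.toFinset_sum_count_nsmul_eq]

lemma card_antidiagonalTuple (r n : ℕ) :
    (Finset.Nat.antidiagonalTuple r n).card = (r + n - 1).choose n := by
  rw [← Fintype.card_coe]
  rw [Fintype.card_congr ((Equiv.subtypeEquivRight (fun f => by
    simpa using Finset.Nat.mem_antidiagonalTuple)).trans (tupleSymEquiv r n)),
    Sym.card_sym_fin_eq_multichoose, Nat.multichoose_eq]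

lemma card_piAntidiag_eq {ι : Type*} [Fintype ι] [LinearOrder ι] [DecidableEq ι]
    (s : Finset ι) (n : ℕ) :
    (Finset.piAntidiag s n).card = (Finset.Nat.antidiagonalTuple s.card n).card := by
  set e := s.orderIsoOfFin rfl with he
  refine Finset.card_bij' (fun f _ => fun j => f (e j))
    (fun g _ => fun a => if h : a ∈ s then g (e.symm ⟨a, h⟩) else 0) ?_ ?_ ?_ ?_
  · intro f hf
    rw [Finset.mem_piAntidiag] at hf
    rw [Finset.Nat.mem_antidiagonalTuple]
    calc ∑ j, f (e j) = ∑ i : {x // x ∈ s}, f i := Equiv.sum_comp e.toEquiv (fun i => f i)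
      _ = ∑ i ∈ s, f i := Finset.sum_coe_sort s f
      _ = n := hf.1
  · intro g hg
    rw [Finset.Nat.mem_antidiagonalTuple] at hg
    rw [Finset.mem_piAntidiag]
    have key : ∀ a : {x // x ∈ s},
        (if h : (a : ι) ∈ s then g (e.symm ⟨(a : ι), h⟩) else 0) = g (e.symm a) := by
      intro a
      rw [dif_pos a.2]
    constructor
    · calc ∑ a ∈ s, (if h : a ∈ s then g (e.symm ⟨a, h⟩) else 0)
          = ∑ a : {x // x ∈ s}, (if h : (a : ι) ∈ s then g (e.symm ⟨(a : ι), h⟩) else 0) :=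
            (Finset.sum_coe_sort s _).symm
        _ = ∑ a : {x // x ∈ s}, g (e.symm a) := Finset.sum_congr rfl (fun a _ => key a)
        _ = ∑ j, g j := Equiv.sum_comp e.symm.toEquiv g
        _ = n := hg
    · intro i hi
      by_contra h
      exact hi (dif_neg h)
  · intro f hf
    funext a
    beta_reduce
    by_cases h : a ∈ s
    · simp [h]
    · rw [dif_neg h]
      rw [Finset.mem_piAntidiag] at hf
      by_contra hne
      exact h (hf.2 a (Ne.symm hne))
  · intro g hg
    funext j
    beta_reduce
    rw [dif_pos (e j).2]
    congr 1
    rw [show (⟨((e j) : ι), (e j).2⟩ : {x // x ∈ s}) = e j from rfl, e.symm_apply_apply]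

lemma fiber_card {r : ℕ} (k s : ℕ) (hs : s ≤ r) (hk2 : s + 2*(r - s) ≤ k)
    (S : Finset (Fin r)) (hS : S.card = s) :
    ((Finset.Nat.antidiagonalTuple r k).filter
      (fun f => (∀ i, 0 < f i) ∧ (Finset.univ.filter fun i => f i = 1) = S)).card
    = (Finset.piAntidiag Sᶜ (k - s - 2*(r - s))).card := by
  have hcompl_card : Sᶜ.card = r - s := by
    rw [Finset.card_compl, hS, Fintype.card_fin]
  refine Finset.card_bij' (fun f _ => fun i => if i ∈ S then 0 else f i - 2)
    (fun g _ => fun i => if i ∈ S then 1 else g i + 2) ?_ ?_ ?_ ?_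
  · intro f hf
    rw [Finset.mem_filter, Finset.Nat.mem_antidiagonalTuple] at hf
    obtain ⟨hsum, hpos, hone⟩ := hf
    have hmem : ∀ i, f i = 1 ↔ i ∈ S := by
      intro i
      rw [← hone, Finset.mem_filter]
      simp
    have hge2 : ∀ i ∈ Sᶜ, 2 ≤ f i := by
      intro i hi
      rw [Finset.mem_compl] at hi
      have h1 : f i ≠ 1 := fun he => hi ((hmem i).1 he)
      have := hpos i
      omega
    have hSsum : ∑ i ∈ S, f i = s := by
      rw [Finset.sum_congr rfl (fun i hi => (hmem i).2 hi), Finset.sum_const, hS, smul_eq_mul,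
        mul_one]
    have hCsum : ∑ i ∈ Sᶜ, f i = k - s := by
      have := Finset.sum_add_sum_compl S f
      rw [hSsum, hsum] at this
      omega
    rw [Finset.mem_piAntidiag]
    constructor
    · calc ∑ i ∈ Sᶜ, (if i ∈ S then 0 else f i - 2)
          = ∑ i ∈ Sᶜ, (f i - 2) := Finset.sum_congr rfl (fun i hi => by
            rw [if_neg (Finset.mem_compl.1 hi)])
        _ = (∑ i ∈ Sᶜ, f i) - ∑ i ∈ Sᶜ, 2 := Finset.sum_tsub_distrib _ hge2
        _ = k - s - 2*(r - s) := by
            rw [hCsum, Finset.sum_const, hcompl_card, smul_eq_mul]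
            omega
    · intro i hi
      rw [Finset.mem_compl]
      intro hmemS
      exact hi (if_pos hmemS)
  · intro g hg
    rw [Finset.mem_piAntidiag] at hg
    obtain ⟨hgsum, hgsupp⟩ := hg
    rw [Finset.mem_filter, Finset.Nat.mem_antidiagonalTuple]
    refine ⟨?_, fun i => by by_cases h : i ∈ S <;> simp [h], ?_⟩
    · rw [← Finset.sum_add_sum_compl S]
      have h1 : ∑ i ∈ S, (if i ∈ S then 1 else g i + 2) = s := by
        rw [Finset.sum_congr rfl (fun i hi => if_pos hi), Finset.sum_const, hS, smul_eq_mul,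
          mul_one]
      have h2 : ∑ i ∈ Sᶜ, (if i ∈ S then 1 else g i + 2)
          = (k - s - 2*(r-s)) + 2*(r - s) := by
        rw [Finset.sum_congr rfl (fun i hi => if_neg (Finset.mem_compl.1 hi)),
          Finset.sum_add_distrib, hgsum, Finset.sum_const, hcompl_card, smul_eq_mul]
        omega
      rw [h1, h2]
      omega
    · ext i
      rw [Finset.mem_filter]
      by_cases h : i ∈ S <;> simp [h]
  · intro f hf
    rw [Finset.mem_filter, Finset.Nat.mem_antidiagonalTuple] at hf
    obtain ⟨hsum, hpos, hone⟩ := hf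
    have hmem : ∀ i, f i = 1 ↔ i ∈ S := by
      intro i
      rw [← hone, Finset.mem_filter]
      simp
    funext i
    beta_reduce
    by_cases h : i ∈ S
    · rw [if_pos h, ((hmem i).2 h).symm]
    · rw [if_neg h, if_neg h]
      have h1 : f i ≠ 1 := fun he => h ((hmem i).1 he)
      have := hpos i
      omega
  · intro g hg
    rw [Finset.mem_piAntidiag] at hg
    obtain ⟨hgsum, hgsupp⟩ := hg
    funext i
    beta_reduce
    by_cases h : i ∈ S
    · rw [if_pos h]
      by_contra hne
      exact (Finset.mem_compl.1 (hgsupp i (fun h0 => hne h0.symm))) h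
    · rw [if_neg h, if_neg h]
      omega

lemma ibinom_of_le (a b : ℕ) (h : b ≤ a) : ibinom a b = a.choose b := by
  rw [ibinom, if_neg (by omega), if_pos ⟨Int.ofNat_nonneg b, by exact_mod_cast h⟩]
  simp

/-- The number of compositions of `k` into exactly `r` (positive) parts with
exactly `s` parts equal to `1` is `binom(r, s) · binom(k - r - 1, r - s - 1)`. -/
theorem card_compositions_with_ones (k r s : ℕ) (hk : 0 < k) (hr : 0 < r)
    (hrk : r ≤ k) (hs : s ≤ r) :
    (((Finset.Nat.antidiagonalTuple r k).filter fun f =>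
        (∀ i, 0 < f i) ∧
          (Finset.univ.filter fun i => f i = 1).card = s).card : ℤ) =
      ibinom r s * ibinom ((k : ℤ) - r - 1) ((r : ℤ) - s - 1) := by
  set A := (Finset.Nat.antidiagonalTuple r k).filter fun f =>
    (∀ i, 0 < f i) ∧ (Finset.univ.filter fun i => f i = 1).card = s with hA
  by_cases hk2 : s + 2*(r - s) ≤ k
  · -- main case: count fiberwise
    have hmap : ∀ f ∈ A, (Finset.univ.filter fun i => f i = 1)
        ∈ Finset.powersetCard s (Finset.univ : Finset (Fin r)) := by
      intro f hf
      rw [Finset.mem_powersetCard_univ]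
      exact ((Finset.mem_filter.1 hf).2).2
    have key : A.card = (r.choose s) *
        ((r - s) + (k - s - 2*(r - s)) - 1).choose (k - s - 2*(r - s)) := by
      rw [Finset.card_eq_sum_card_fiberwise hmap]
      have step : ∀ S ∈ Finset.powersetCard s (Finset.univ : Finset (Fin r)),
          (A.filter fun f => (Finset.univ.filter fun i => f i = 1) = S).card
          = ((r - s) + (k - s - 2*(r - s)) - 1).choose (k - s - 2*(r - s)) := by
        intro S hSmem
        have hS : S.card = s := Finset.mem_powersetCard_univ.1 hSmem
        rw [hA, Finset.filter_filter]
        have heq : ((Finset.Nat.antidiagonalTuple r k).filter fun f =>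
            ((∀ i, 0 < f i) ∧ (Finset.univ.filter fun i => f i = 1).card = s) ∧
              (Finset.univ.filter fun i => f i = 1) = S)
            = ((Finset.Nat.antidiagonalTuple r k).filter fun f =>
            (∀ i, 0 < f i) ∧ (Finset.univ.filter fun i => f i = 1) = S) := by
          apply Finset.filter_congr
          intro f _
          constructor
          · rintro ⟨⟨h1, _⟩, h3⟩; exact ⟨h1, h3⟩
          · rintro ⟨h1, h3⟩; exact ⟨⟨h1, by rw [h3, hS]⟩, h3⟩
        rw [heq, fiber_card k s hs hk2 S hS, card_piAntidiag_eq,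
          Finset.card_compl, hS, Fintype.card_fin, card_antidiagonalTuple]
      rw [Finset.sum_congr rfl step, Finset.sum_const, smul_eq_mul,
        Finset.card_powersetCard, Finset.card_univ, Fintype.card_fin]
    rw [key]
    rcases eq_or_lt_of_le hs with hsr | hsr
    · -- s = r
      subst hsr
      rcases eq_or_lt_of_le hrk with hkr | hkr
      · -- k = r = s
        subst hkr
        have : ibinom ((s:ℤ) - s - 1) ((s:ℤ) - s - 1) = 1 := by
          rw [ibinom, if_pos (by constructor <;> omega)]
        rw [show ((s:ℤ) - s - 1) = -1 by ring] at this ⊢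
        rw [this, ibinom_of_le s s le_rfl]
        simp
      · -- k > r = s
        have h1 : (s - s) + (k - s - 2*(s - s)) - 1 = (k - s) - 1 := by omega
        have h2 : ((k - s) - 1).choose (k - s - 2*(s-s)) = 0 := by
          apply Nat.choose_eq_zero_of_lt
          omega
        rw [h1, h2, Nat.mul_zero]
        have hz : ibinom ((k:ℤ) - s - 1) ((s:ℤ) - s - 1) = 0 := by
          rw [ibinom, if_neg (by omega), if_neg (by omega)]
        rw [hz, Nat.cast_zero, mul_zero]
    · -- s < r
      have hkr : r + 1 ≤ k := by omega
      have h1 : (r - s) + (k - s - 2*(r - s)) - 1 = k - r - 1 := by omega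
      have h2 : (k - s - 2*(r - s)) = (k - r - 1) - (r - s - 1) := by omega
      have h3 : r - s - 1 ≤ k - r - 1 := by omega
      rw [h1, h2, Nat.choose_symm h3]
      rw [ibinom_of_le r s hs]
      rw [show ((k:ℤ) - r - 1) = ((k - r - 1 : ℕ) : ℤ) by push_cast; omega,
        show ((r:ℤ) - s - 1) = ((r - s - 1 : ℕ) : ℤ) by push_cast; omega,
        ibinom_of_le _ _ h3]
      push_cast
      ring
  · -- degenerate case: no such compositions
    have hsr : s < r := by omega
    have hA0 : A = ∅ := by
      apply Finset.eq_empty_of_forall_notMem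
      intro f hf
      rw [hA, Finset.mem_filter, Finset.Nat.mem_antidiagonalTuple] at hf
      obtain ⟨hsum, hpos, hcard⟩ := hf
      set S := Finset.univ.filter fun i => f i = 1 with hSdef
      have hge2 : ∀ i ∈ Sᶜ, 2 ≤ f i := by
        intro i hi
        rw [Finset.mem_compl, hSdef, Finset.mem_filter] at hi
        have h1 : f i ≠ 1 := fun he => hi ⟨Finset.mem_univ i, he⟩
        have := hpos i
        omega
      have hSsum : ∑ i ∈ S, f i = s := by
        rw [Finset.sum_congr rfl (fun i hi => (Finset.mem_filter.1 hi).2),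
          Finset.sum_const, hcard, smul_eq_mul, mul_one]
      have hCsum : 2 * (r - s) ≤ ∑ i ∈ Sᶜ, f i := by
        calc 2 * (r - s) = ∑ _i ∈ Sᶜ, 2 := by
              rw [Finset.sum_const, Finset.card_compl, hcard, Fintype.card_fin, smul_eq_mul]
              ring
          _ ≤ ∑ i ∈ Sᶜ, f i := Finset.sum_le_sum hge2
      have := Finset.sum_add_sum_compl S f
      rw [hSsum, hsum] at this
      omega
    rw [hA0]
    have : ibinom ((k:ℤ) - r - 1) ((r:ℤ) - s - 1) = 0 := by
      rw [ibinom, if_neg (by omega), if_neg (by omega)]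
    rw [this]
    simp
end

section
/- For positive integers k and r with r ≤ k, one has Σ_{α ∈ Comp(k,r)} (-1)^{ℓ₂(α)} = Σ_{s=0}^{r} (-1)^{r-s} binom(r, s) binom(k - r - 1, r - s - 1), where the convention binom(-1,-1) = 1 (and binom(-1,n) = binom(n,-1) = 0 for n ≠ -1) is used. -/
open Finset

/-- Number of compositions of `m` into exactly `j` positive parts, as an integer. -/
def ccomp (m j : ℕ) : ℤ :=
  if j = 0 then (if m = 0 then 1 else 0)
  else if m = 0 then 0 else ((m - 1).choose (j - 1) : ℤ)

lemma ccomp_add (m j : ℕ) : ccomp m j + ccomp m (j + 1) = (m.choose j : ℤ) := by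
  rcases m with _ | m
  · rcases j with _ | j <;> simp [ccomp]
  · rcases j with _ | j
    · simp [ccomp]
    · simp only [ccomp, Nat.succ_ne_zero, if_false, Nat.add_sub_cancel]
      rw [Nat.choose_succ_succ]
      push_cast
      ring

lemma sum_ccomp (m j : ℕ) : ∑ n ∈ range (m + 1), ccomp n j = (m.choose j : ℤ) := by
  induction m with
  | zero => rcases j with _ | j <;> simp [ccomp]
  | succ m ih =>
      rw [Finset.sum_range_succ, ih]
      rcases j with _ | j
      · simp [ccomp]
      · simp only [ccomp, Nat.succ_ne_zero, if_false, Nat.add_sub_cancel]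
        rw [Nat.choose_succ_succ]
        push_cast
        ring

/-- The signed sum over tuples in `antidiagonalTuple r m`, signed by the number of
positive entries. -/
def Tsum (r m : ℕ) : ℤ :=
  ∑ f ∈ Finset.Nat.antidiagonalTuple r m,
    (-1 : ℤ) ^ (Finset.univ.filter fun i => 1 ≤ f i).card

/-- The binomial-sum side. -/
def Bsum (r m : ℕ) : ℤ :=
  ∑ j ∈ range (r + 1), (-1 : ℤ) ^ j * (r.choose j : ℤ) * ccomp m j

lemma Tsum_succ (r m : ℕ) :
    Tsum (r + 1) m =
      ∑ t ∈ range (m + 1), (if 1 ≤ t then (-1 : ℤ) else 1) * Tsum r (m - t) := by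
  have key : Tsum (r + 1) m =
      ∑ p ∈ Finset.HasAntidiagonal.antidiagonal m, (if 1 ≤ p.1 then (-1 : ℤ) else 1) * Tsum r p.2 := by
    rw [Tsum]
    simp only [Tsum, Finset.mul_sum]
    rw [Finset.sum_sigma']
    refine Finset.sum_nbij' (fun f => ⟨(f 0, ∑ i, Fin.tail f i), Fin.tail f⟩)
      (fun x => Fin.cons x.1.1 x.2) ?_ ?_ ?_ ?_ ?_
    · intro f hf
      rw [Finset.Nat.mem_antidiagonalTuple] at hf
      simp only [Finset.mem_sigma, Finset.HasAntidiagonal.mem_antidiagonal,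
        Finset.Nat.mem_antidiagonalTuple, and_true]
      rw [← hf, Fin.sum_univ_succ]
      rfl
    · intro x hx
      simp only [Finset.mem_sigma, Finset.HasAntidiagonal.mem_antidiagonal,
        Finset.Nat.mem_antidiagonalTuple] at hx ⊢
      rw [Fin.sum_cons, hx.2, hx.1]
    · intro f _
      exact Fin.cons_self_tail f
    · intro x hx
      simp only [Finset.mem_sigma, Finset.HasAntidiagonal.mem_antidiagonal,
        Finset.Nat.mem_antidiagonalTuple] at hx
      obtain ⟨⟨a, b⟩, g⟩ := x
      simp only at hx
      simp [Fin.tail_cons, hx.2]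
    · intro f _
      show (-1 : ℤ) ^ (Finset.univ.filter fun i : Fin (r + 1) => 1 ≤ f i).card
          = (if 1 ≤ f 0 then (-1 : ℤ) else 1)
            * (-1 : ℤ) ^ (Finset.univ.filter fun i : Fin r => 1 ≤ Fin.tail f i).card
      have hcard : (Finset.univ.filter fun i : Fin (r + 1) => 1 ≤ f i).card
          = (if 1 ≤ f 0 then 1 else 0)
            + (Finset.univ.filter fun i : Fin r => 1 ≤ Fin.tail f i).card := by
        rw [Finset.card_filter, Finset.card_filter, Fin.sum_univ_succ]
        rfl
      rw [hcard, pow_add]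
      congr 1
      split <;> simp
  rw [key, Finset.Nat.sum_antidiagonal_eq_sum_range_succ_mk]

lemma Bsum_succ (r m : ℕ) :
    Bsum (r + 1) m = 2 * Bsum r m
      - ∑ j ∈ range (r + 1), (-1 : ℤ) ^ j * (r.choose j : ℤ) * (m.choose j : ℤ) := by
  have h1 : Bsum (r + 1) m = ccomp m 0
      + ∑ j ∈ range (r + 1),
        (-1 : ℤ) ^ (j + 1) * ((r.choose j : ℤ) + (r.choose (j + 1) : ℤ)) * ccomp m (j + 1) := by
    rw [Bsum, Finset.sum_range_succ' _ (r + 1)]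
    simp only [pow_zero, Nat.choose_zero_right, Nat.cast_one, one_mul]
    rw [add_comm]
    congr 1
  have h2 : ∑ j ∈ range (r + 1), (-1 : ℤ) ^ (j + 1) * (r.choose (j + 1) : ℤ) * ccomp m (j + 1)
      = Bsum r m - ccomp m 0 := by
    have hB : Bsum r m
        = ∑ j ∈ range r, (-1 : ℤ) ^ (j + 1) * (r.choose (j + 1) : ℤ) * ccomp m (j + 1)
          + ccomp m 0 := by
      rw [Bsum, Finset.sum_range_succ']
      simp
    rw [Finset.sum_range_succ, hB]
    simp [Nat.choose_succ_self]
  have h3 : ∑ j ∈ range (r + 1), (-1 : ℤ) ^ j * (r.choose j : ℤ) * ccomp m (j + 1)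
      = (∑ j ∈ range (r + 1), (-1 : ℤ) ^ j * (r.choose j : ℤ) * (m.choose j : ℤ)) - Bsum r m := by
    rw [Bsum, ← Finset.sum_sub_distrib]
    apply Finset.sum_congr rfl
    intro j _
    have h : ccomp m (j + 1) = (m.choose j : ℤ) - ccomp m j := by
      have := ccomp_add m j; linarith
    rw [h]
    ring
  have h4 : ∑ j ∈ range (r + 1),
        (-1 : ℤ) ^ (j + 1) * ((r.choose j : ℤ) + (r.choose (j + 1) : ℤ)) * ccomp m (j + 1)
      = (∑ j ∈ range (r + 1), (-1 : ℤ) ^ (j + 1) * (r.choose (j + 1) : ℤ) * ccomp m (j + 1))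
        - ∑ j ∈ range (r + 1), (-1 : ℤ) ^ j * (r.choose j : ℤ) * ccomp m (j + 1) := by
    rw [← Finset.sum_sub_distrib]
    apply Finset.sum_congr rfl
    intro j _
    ring
  rw [h1, h4, h2, h3]
  ring

lemma Tsum_eq_Bsum (r m : ℕ) : Tsum r m = Bsum r m := by
  induction r generalizing m with
  | zero =>
      rcases m with _ | m <;> simp [Tsum, Bsum, ccomp]
  | succ r ih =>
      rw [Tsum_succ, Bsum_succ]
      have split : ∑ t ∈ range (m + 1), (if 1 ≤ t then (-1 : ℤ) else 1) * Tsum r (m - t)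
          = 2 * Tsum r m - ∑ t ∈ range (m + 1), Tsum r (m - t) := by
        have hterm : ∀ t ∈ range (m + 1), (if 1 ≤ t then (-1 : ℤ) else 1) * Tsum r (m - t)
            = (if t = 0 then 2 * Tsum r (m - t) else 0) - Tsum r (m - t) := by
          intro t _
          rcases t with _ | t <;> simp <;> ring
        rw [Finset.sum_congr rfl hterm, Finset.sum_sub_distrib, Finset.sum_ite_eq']
        simp
      rw [split]
      have hrefl : ∑ t ∈ range (m + 1), Tsum r (m - t) = ∑ n ∈ range (m + 1), Tsum r n := by
        rw [← Finset.sum_range_reflect (fun n => Tsum r n) (m + 1)]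
        apply Finset.sum_congr rfl
        intro j _
        congr 1 <;> omega
      rw [hrefl]
      have hsum : ∑ n ∈ range (m + 1), Tsum r n
          = ∑ j ∈ range (r + 1), (-1 : ℤ) ^ j * (r.choose j : ℤ) * (m.choose j : ℤ) := by
        calc ∑ n ∈ range (m + 1), Tsum r n
            = ∑ n ∈ range (m + 1), ∑ j ∈ range (r + 1),
                (-1 : ℤ) ^ j * (r.choose j : ℤ) * ccomp n j :=
              Finset.sum_congr rfl fun n _ => (ih n).trans rfl
          _ = ∑ j ∈ range (r + 1), ∑ n ∈ range (m + 1),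
                (-1 : ℤ) ^ j * (r.choose j : ℤ) * ccomp n j := Finset.sum_comm
          _ = ∑ j ∈ range (r + 1), (-1 : ℤ) ^ j * (r.choose j : ℤ) * (m.choose j : ℤ) := by
              apply Finset.sum_congr rfl
              intro j _
              rw [← Finset.mul_sum, sum_ccomp]
      rw [ih m, hsum]

lemma ibinom_eq_ccomp (m j : ℕ) : ibinom ((m : ℤ) - 1) ((j : ℤ) - 1) = ccomp m j := by
  rcases m with _ | m <;> rcases j with _ | j
  · simp [ibinom, ccomp]
  · rw [ibinom, ccomp]
    norm_num
    omega
  · rw [ibinom, ccomp]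
    norm_num
    omega
  · rw [ibinom, ccomp]
    push_cast
    simp only [add_sub_cancel_right]
    have h1 : ¬((m : ℤ) = -1 ∧ (j : ℤ) = -1) := by
      rintro ⟨h, -⟩; omega
    rw [if_neg h1]
    by_cases h : (j : ℤ) ≤ (m : ℤ)
    · rw [if_pos ⟨Int.natCast_nonneg j, h⟩]
      simp [Nat.succ_ne_zero]
    · rw [if_neg (by tauto)]
      have hlt : m < j := by omega
      simp [Nat.succ_ne_zero, Nat.choose_eq_zero_of_lt hlt]

/-- `Σ_{α ∈ Comp(k,r)} (-1)^{ℓ₂(α)}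
      = Σ_{s=0}^{r} (-1)^{r-s} binom(r,s) binom(k-r-1, r-s-1)`,
where `ℓ₂(α)` is the number of parts of `α` that are at least `2`. -/
theorem sum_comp_sign (k r : ℕ) (hk : 0 < k) (hr : 0 < r) (hrk : r ≤ k) :
    ∑ f ∈ (Finset.Nat.antidiagonalTuple r k).filter (fun f => ∀ i, 0 < f i),
        (-1 : ℤ) ^ (Finset.univ.filter fun i => 2 ≤ f i).card =
      ∑ s ∈ Finset.range (r + 1),
        (-1 : ℤ) ^ (r - s) * ibinom r s * ibinom ((k : ℤ) - r - 1) ((r : ℤ) - s - 1) := by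
  refine Eq.trans ?_ (Eq.trans (Tsum_eq_Bsum r (k - r)) ?_)
  · rw [Tsum]
    refine Finset.sum_nbij' (fun f i => f i - 1) (fun g i => g i + 1) ?_ ?_ ?_ ?_ ?_
    · intro f hf
      rw [Finset.mem_filter, Finset.Nat.mem_antidiagonalTuple] at hf
      rw [Finset.Nat.mem_antidiagonalTuple]
      show ∑ i, (f i - 1) = k - r
      have h1 : ∀ i ∈ (Finset.univ : Finset (Fin r)), 1 ≤ f i := fun i _ => hf.2 i
      have h2 : ∑ i, (f i - 1) = (∑ i, f i) - ∑ _i : Fin r, 1 :=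
        Finset.sum_tsub_distrib Finset.univ h1
      rw [h2, hf.1]
      simp
    · intro g hg
      rw [Finset.Nat.mem_antidiagonalTuple] at hg
      rw [Finset.mem_filter, Finset.Nat.mem_antidiagonalTuple]
      refine ⟨?_, fun i => Nat.succ_le_succ (Nat.zero_le _)⟩
      show ∑ i, (g i + 1) = k
      rw [Finset.sum_add_distrib, hg]
      simp
      omega
    · intro f hf
      rw [Finset.mem_filter] at hf
      funext i
      show f i - 1 + 1 = f i
      have := hf.2 i
      omega
    · intro g _
      funext i
      show g i + 1 - 1 = g i
      omega
    · intro f hf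
      rw [Finset.mem_filter] at hf
      show (-1 : ℤ) ^ (Finset.univ.filter fun i => 2 ≤ f i).card
          = (-1 : ℤ) ^ (Finset.univ.filter fun i : Fin r => 1 ≤ f i - 1).card
      have hfil : (Finset.univ.filter fun i => 2 ≤ f i)
          = (Finset.univ.filter fun i : Fin r => 1 ≤ f i - 1) := by
        apply Finset.filter_congr
        intro i _
        have := hf.2 i
        constructor <;> intro <;> omega
      rw [hfil]
  · symm
    refine ((Finset.sum_range_reflect (fun s => (-1 : ℤ) ^ (r - s) * ibinom r s
        * ibinom ((k : ℤ) - r - 1) ((r : ℤ) - s - 1)) (r + 1)).symm).trans ?_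
    rw [Bsum]
    apply Finset.sum_congr rfl
    intro j hj
    rw [Finset.mem_range] at hj
    have hjr : j ≤ r := by omega
    have e1 : r + 1 - 1 - j = r - j := by omega
    rw [e1]
    have e2 : r - (r - j) = j := by omega
    rw [e2]
    have e3 : ibinom (r : ℤ) ((r - j : ℕ) : ℤ) = (r.choose j : ℤ) := by
      rw [ibinom]
      have h1 : ¬((r : ℤ) = -1 ∧ ((r - j : ℕ) : ℤ) = -1) := by
        rintro ⟨h, -⟩; omega
      rw [if_neg h1, if_pos ⟨Int.natCast_nonneg _, by exact_mod_cast Nat.sub_le r j⟩]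
      rw [Int.toNat_natCast, Int.toNat_natCast, Nat.choose_symm hjr]
    rw [e3]
    have e4 : (k : ℤ) - r - 1 = ((k - r : ℕ) : ℤ) - 1 := by
      have : ((k - r : ℕ) : ℤ) = (k : ℤ) - r := by omega
      rw [this]
    have e5 : (r : ℤ) - ((r - j : ℕ) : ℤ) - 1 = (j : ℤ) - 1 := by
      have : ((r - j : ℕ) : ℤ) = (r : ℤ) - j := by omega
      rw [this]; ring
    rw [e4, e5, ibinom_eq_ccomp]
end

section
/- In the ring of formal power series in x and z, the following identity holds for each positive integer k: 1/((1-z)(1 - Σ_{i=1}^{k} x^i Σ_{j=0}^{i} z^j)) = Σ_{r ≥ 0} z^r (1 - Σ_{i=1}^{k} x^i z^i)^r / (1 - x - x^2 - ⋯ - x^k)^{1+r}. -/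
open PowerSeries

/-- Work in `R⟦z⟧` where `R = ℚ⟦x⟧`.  Let
`S = Σ_{i=1}^k x^i Σ_{j=0}^i z^j`, let `d⁻¹` be the geometric-series inverse of
`1 - x - ⋯ - x^k` in `ℚ⟦x⟧`, and let `F` be the formal power series in `z`
whose coefficient of `z^n` is the (stabilizing) sum
`Σ_{r=0}^{n} [z^n] ( z^r (1 - Σ_{i=1}^k x^i z^i)^r (d⁻¹)^{1+r} )`
(each summand has `z`-order at least `r`, so this is the sum over all `r ≥ 0`).
Then `F = 1 / ((1-z)(1 - S))`, i.e. `(1 - z)(1 - S) F = 1`. -/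
theorem geom_series_identity (k : ℕ) (hk : 0 < k) :
    letI R := PowerSeries ℚ
    letI x : R := PowerSeries.X
    letI S : PowerSeries R :=
      ∑ i ∈ Finset.Icc 1 k, PowerSeries.C (x ^ i) *
        ∑ j ∈ Finset.range (i + 1), PowerSeries.X ^ j
    letI dInv : R := PowerSeries.invOfUnit (1 - ∑ i ∈ Finset.Icc 1 k, x ^ i) 1
    letI term : ℕ → PowerSeries R := fun r =>
      PowerSeries.X ^ r *
        (1 - ∑ i ∈ Finset.Icc 1 k, PowerSeries.C (x ^ i) * PowerSeries.X ^ i) ^ r *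
        PowerSeries.C dInv ^ (1 + r)
    letI F : PowerSeries R := PowerSeries.mk fun n =>
      PowerSeries.coeff n (∑ r ∈ Finset.range (n + 1), term r)
    (1 - PowerSeries.X) * (1 - S) * F = 1 := by
  beta_reduce
  set dInv : PowerSeries ℚ :=
    PowerSeries.invOfUnit (1 - ∑ i ∈ Finset.Icc 1 k, (PowerSeries.X : PowerSeries ℚ) ^ i) 1
    with hdInv_def
  set term : ℕ → PowerSeries (PowerSeries ℚ) := fun r =>
    PowerSeries.X ^ r *
      (1 - ∑ i ∈ Finset.Icc 1 k,
        PowerSeries.C ((PowerSeries.X : PowerSeries ℚ) ^ i) *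
          PowerSeries.X ^ i) ^ r *
      PowerSeries.C dInv ^ (1 + r) with hterm_def
  set F : PowerSeries (PowerSeries ℚ) := PowerSeries.mk fun n =>
    PowerSeries.coeff n (∑ r ∈ Finset.range (n + 1), term r) with hF_def
  set S : PowerSeries (PowerSeries ℚ) :=
    ∑ i ∈ Finset.Icc 1 k, PowerSeries.C ((PowerSeries.X : PowerSeries ℚ) ^ i) *
      ∑ j ∈ Finset.range (i + 1), PowerSeries.X ^ j with hS_def
  -- the denominator in ℚ⟦x⟧ and its inverse
  have hdinv : (1 - ∑ i ∈ Finset.Icc 1 k, (PowerSeries.X : PowerSeries ℚ) ^ i) * dInv = 1 := by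
    apply PowerSeries.mul_invOfUnit
    rw [map_sub, map_one, map_sum, Finset.sum_eq_zero, sub_zero, Units.val_one]
    intro i hi
    rw [map_pow, PowerSeries.constantCoeff_X]
    exact zero_pow (by have := (Finset.mem_Icc.mp hi).1; omega)
  set D : PowerSeries (PowerSeries ℚ) :=
    PowerSeries.C (1 - ∑ i ∈ Finset.Icc 1 k, (PowerSeries.X : PowerSeries ℚ) ^ i)
    with hD
  set A : PowerSeries (PowerSeries ℚ) :=
    1 - ∑ i ∈ Finset.Icc 1 k,
      PowerSeries.C ((PowerSeries.X : PowerSeries ℚ) ^ i) * PowerSeries.X ^ i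
    with hA
  have hDinv : D * PowerSeries.C dInv = 1 := by
    rw [hD, ← map_mul, hdinv, map_one]
  have hterm : ∀ r, term r =
      PowerSeries.X ^ r * A ^ r * (PowerSeries.C dInv) ^ (1 + r) := by
    intro r
    simp only [hterm_def, hA]
  -- factorization of the left factor
  have hgeo : ∀ i : ℕ, (1 - (PowerSeries.X : PowerSeries (PowerSeries ℚ))) *
      ∑ j ∈ Finset.range (i + 1), PowerSeries.X ^ j
      = 1 - PowerSeries.X ^ (i + 1) := by
    intro i
    have h := geom_sum_mul (PowerSeries.X : PowerSeries (PowerSeries ℚ)) (i + 1)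
    linear_combination -h
  have hfactor : (1 - PowerSeries.X) * (1 - S) = D - PowerSeries.X * A := by
    have h1 : (1 - PowerSeries.X) * S =
        ∑ i ∈ Finset.Icc 1 k,
          PowerSeries.C ((PowerSeries.X : PowerSeries ℚ) ^ i) *
            (1 - PowerSeries.X ^ (i + 1)) := by
      rw [hS_def, Finset.mul_sum]
      refine Finset.sum_congr rfl fun i _ => ?_
      rw [← hgeo i]
      ring
    rw [mul_sub, mul_one, h1, hD, hA, map_sub, map_one, map_sum]
    rw [show ∑ i ∈ Finset.Icc 1 k,
          PowerSeries.C ((PowerSeries.X : PowerSeries ℚ) ^ i) *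
            (1 - PowerSeries.X ^ (i + 1))
        = (∑ i ∈ Finset.Icc 1 k,
            PowerSeries.C ((PowerSeries.X : PowerSeries ℚ) ^ i))
          - ∑ i ∈ Finset.Icc 1 k,
            PowerSeries.C ((PowerSeries.X : PowerSeries ℚ) ^ i) *
              PowerSeries.X ^ (i + 1) by
      rw [← Finset.sum_sub_distrib]
      exact Finset.sum_congr rfl fun i _ => by ring]
    have h2 : PowerSeries.X * ∑ i ∈ Finset.Icc 1 k,
          PowerSeries.C ((PowerSeries.X : PowerSeries ℚ) ^ i) * PowerSeries.X ^ i
        = ∑ i ∈ Finset.Icc 1 k,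
          PowerSeries.C ((PowerSeries.X : PowerSeries ℚ) ^ i) *
            PowerSeries.X ^ (i + 1) := by
      rw [Finset.mul_sum]
      exact Finset.sum_congr rfl fun i _ => by ring
    linear_combination -h2
  -- telescoping
  have hterm0 : D * term 0 = 1 := by
    rw [hterm 0]
    simpa using hDinv
  have hstep : ∀ r : ℕ, D * term (r + 1) = PowerSeries.X * A * term r := by
    intro r
    rw [hterm, hterm]
    calc D * (PowerSeries.X ^ (r + 1) * A ^ (r + 1) *
            PowerSeries.C dInv ^ (1 + (r + 1)))
        = (D * PowerSeries.C dInv) *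
          (PowerSeries.X * A * (PowerSeries.X ^ r * A ^ r *
            PowerSeries.C dInv ^ (1 + r))) := by
          ring
      _ = PowerSeries.X * A * (PowerSeries.X ^ r * A ^ r *
            PowerSeries.C dInv ^ (1 + r)) := by
          rw [hDinv, one_mul]
  have htel : ∀ n : ℕ, (D - PowerSeries.X * A) * (∑ r ∈ Finset.range (n + 1), term r)
      = 1 - D * term (n + 1) := by
    intro n
    induction n with
    | zero =>
      rw [Finset.sum_range_one, sub_mul, hstep 0, hterm0]
    | succ n ih =>
      rw [Finset.sum_range_succ, mul_add, ih]
      linear_combination hstep (n + 1)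
  -- vanishing of low coefficients
  have hvanish : ∀ (r : ℕ) (g : PowerSeries (PowerSeries ℚ)) (b : ℕ), b < r →
      PowerSeries.coeff b (PowerSeries.X ^ r * g) = 0 := by
    intro r g b hb
    exact PowerSeries.X_pow_dvd_iff.mp (dvd_mul_right _ g) b hb
  have hcoeff_term : ∀ (b r : ℕ), b < r →
      PowerSeries.coeff b (term r) = 0 := by
    intro b r hb
    rw [hterm, mul_assoc]
    exact hvanish r _ b hb
  -- coefficients of F agree with partial sums
  have hF : ∀ (b n : ℕ), b ≤ n →
      PowerSeries.coeff b F =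
        PowerSeries.coeff b (∑ r ∈ Finset.range (n + 1), term r) := by
    intro b n hbn
    simp only [hF_def, PowerSeries.coeff_mk]
    rw [map_sum, map_sum]
    apply Finset.sum_subset
    · exact Finset.range_subset_range.mpr (by omega)
    · intro r hr hr'
      exact hcoeff_term b r (by simp only [Finset.mem_range] at hr hr' ⊢; omega)
  rw [hfactor]
  apply PowerSeries.ext
  intro n
  have key : PowerSeries.coeff n ((D - PowerSeries.X * A) * F)
      = PowerSeries.coeff n
        ((D - PowerSeries.X * A) * ∑ r ∈ Finset.range (n + 1), term r) := by
    rw [PowerSeries.coeff_mul, PowerSeries.coeff_mul]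
    apply Finset.sum_congr rfl
    intro p hp
    have hp2 : p.2 ≤ n := by
      have := Finset.HasAntidiagonal.mem_antidiagonal.mp hp
      omega
    rw [hF p.2 n hp2]
  rw [key, htel n, map_sub]
  have hv : PowerSeries.coeff n (D * term (n + 1)) = 0 := by
    have hrw : D * term (n + 1) = PowerSeries.X ^ (n + 1) *
        (D * (A ^ (n + 1) * PowerSeries.C dInv ^ (1 + (n + 1)))) := by
      rw [hterm]; ring
    rw [hrw]
    exact hvanish (n + 1) _ n (by omega)
  rw [hv, sub_zero]
end

section
/- For each positive integer k, the number of finite sequences ((u_1,v_1), …, (u_r,v_r)) (r ≥ 0 arbitrary) of pairs of nonnegative integers with 1 ≤ u_i + v_i ≤ k for each i, with v_1 + ⋯ + v_r ≤ k, and with total sum u_1 + ⋯ + u_r + v_1 + ⋯ + v_r = b, equals the coefficient of x^b z^k in the formal power series (1/(1-z)) · 1/(1 - Σ_{i=1}^{k} x^i Σ_{j=0}^{i} z^j). -/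
open PowerSeries

/-! ### Auxiliary definitions -/

/-- The type of admissible lists with sum-bound `k` per pair, snd-budget `m`, total `b`. -/
def TT (k b m : ℕ) : Type :=
  {l : List (ℕ × ℕ) //
    (∀ p ∈ l, 1 ≤ p.1 + p.2 ∧ p.1 + p.2 ≤ k) ∧
      (l.map Prod.snd).sum ≤ m ∧
      (l.map fun p => p.1 + p.2).sum = b}

/-- Admissible first pairs. -/
def PP (k b m : ℕ) : Finset (ℕ × ℕ) :=
  (Finset.range (k + 1) ×ˢ Finset.range (k + 1)).filter
    fun p => 1 ≤ p.1 + p.2 ∧ p.1 + p.2 ≤ k ∧ p.1 + p.2 ≤ b ∧ p.2 ≤ m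

lemma mem_PP {k b m : ℕ} {p : ℕ × ℕ} :
    p ∈ PP k b m ↔ 1 ≤ p.1 + p.2 ∧ p.1 + p.2 ≤ k ∧ p.1 + p.2 ≤ b ∧ p.2 ≤ m := by
  constructor
  · intro h; exact (Finset.mem_filter.mp h).2
  · intro h
    refine Finset.mem_filter.mpr ⟨Finset.mem_product.mpr ⟨?_, ?_⟩, h⟩ <;>
      simp only [Finset.mem_range] <;> omega

/-- Count of admissible lists, defined recursively. -/
def cnt (k : ℕ) : ℕ → ℕ → ℕ
  | 0, _ => 1
  | (b + 1), m =>
    ∑ p ∈ (PP k (b + 1) m).attach, cnt k (b + 1 - (p.1.1 + p.1.2)) (m - p.1.2)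
  decreasing_by
    have h := mem_PP.mp p.2
    omega

/-- The "cons" map from the sigma decomposition to lists. -/
def consFun (k b m : ℕ) :
    (Σ p : {p : ℕ × ℕ // p ∈ PP k (b + 1) m},
        TT k (b + 1 - (p.1.1 + p.1.2)) (m - p.1.2)) → TT k (b + 1) m :=
  fun x => match x with
  | ⟨⟨p, hp⟩, ⟨t, ht1, ht2, ht3⟩⟩ =>
    ⟨p :: t, by
      rw [mem_PP] at hp
      dsimp only at ht2 ht3
      refine ⟨?_, ?_, ?_⟩
      · intro q hq
        rcases List.mem_cons.mp hq with h | h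
        · subst h; exact ⟨hp.1, hp.2.1⟩
        · exact ht1 q h
      · simp only [List.map_cons, List.sum_cons]; omega
      · simp only [List.map_cons, List.sum_cons]; omega⟩

lemma consFun_bijective (k b m : ℕ) : Function.Bijective (consFun k b m) := by
  constructor
  · rintro ⟨⟨p, hp⟩, t, ht1, ht2, ht3⟩ ⟨⟨q, hq⟩, s, hs1, hs2, hs3⟩ h
    have h' : p :: t = q :: s := congrArg Subtype.val h
    injection h' with h1 h2
    subst h1; subst h2
    rfl
  · rintro ⟨l, hl⟩
    obtain ⟨h1, h2, h3⟩ := hl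
    cases l with
    | nil => simp at h3
    | cons a t =>
      simp only [List.map_cons, List.sum_cons] at h2 h3
      have ha := h1 a (List.mem_cons_self)
      refine ⟨⟨⟨a, mem_PP.mpr ⟨ha.1, ha.2, by omega, by omega⟩⟩,
        ⟨t, fun q hq => h1 q (List.mem_cons_of_mem a hq),
          show (t.map Prod.snd).sum ≤ m - a.2 by omega,
          show (t.map fun p => p.1 + p.2).sum = b + 1 - (a.1 + a.2) by omega⟩⟩, ?_⟩
      rfl

lemma finite_TT (k : ℕ) : ∀ b m, Finite (TT k b m) := by
  intro b
  induction b using Nat.strong_induction_on with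
  | _ b ih =>
    intro m
    match b with
    | 0 =>
      have : ∀ x : TT k 0 m, x.1 = [] := by
        rintro ⟨l, hl1, hl2, hl3⟩
        cases l with
        | nil => rfl
        | cons a t =>
          simp only [List.map_cons, List.sum_cons] at hl3
          have := hl1 a (List.mem_cons_self)
          omega
      have hs : Subsingleton (TT k 0 m) :=
        ⟨fun x y => Subtype.ext ((this x).trans (this y).symm)⟩
      exact Finite.of_subsingleton
    | (b + 1) =>
      haveI : ∀ p : {p : ℕ × ℕ // p ∈ PP k (b + 1) m},
          Finite (TT k (b + 1 - (p.1.1 + p.1.2)) (m - p.1.2)) := by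
        intro p
        have h := mem_PP.mp p.2
        exact ih _ (by omega) _
      exact Finite.of_surjective _ (consFun_bijective k b m).2

lemma card_TT (k : ℕ) : ∀ b m, Nat.card (TT k b m) = cnt k b m := by
  intro b
  induction b using Nat.strong_induction_on with
  | _ b ih =>
    intro m
    match b with
    | 0 =>
      rw [cnt]
      rw [Nat.card_eq_one_iff_unique]
      constructor
      · refine ⟨fun x y => Subtype.ext ?_⟩
        have key : ∀ x : TT k 0 m, x.1 = [] := by
          rintro ⟨l, hl1, hl2, hl3⟩
          cases l with
          | nil => rfl
          | cons a t =>
            simp only [List.map_cons, List.sum_cons] at hl3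
            have := hl1 a (List.mem_cons_self)
            omega
        rw [key x, key y]
      · exact ⟨⟨[], by simp, by simp, by simp⟩⟩
    | (b + 1) =>
      haveI hfin : ∀ p : {p : ℕ × ℕ // p ∈ PP k (b + 1) m},
          Finite (TT k (b + 1 - (p.1.1 + p.1.2)) (m - p.1.2)) := by
        intro p
        have h := mem_PP.mp p.2
        exact finite_TT k _ _
      letI : ∀ p : {p : ℕ × ℕ // p ∈ PP k (b + 1) m},
          Fintype (TT k (b + 1 - (p.1.1 + p.1.2)) (m - p.1.2)) :=
        fun p => Fintype.ofFinite _
      rw [← Nat.card_eq_of_bijective _ (consFun_bijective k b m)]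
      rw [Nat.card_eq_fintype_card, Fintype.card_sigma, cnt]
      rw [Finset.univ_eq_attach]
      refine Finset.sum_congr rfl ?_
      intro p _
      have h := mem_PP.mp p.2
      rw [← Nat.card_eq_fintype_card, ih _ (by omega)]

lemma cnt_succ (k b m : ℕ) :
    cnt k (b + 1) m = ∑ i ∈ Finset.Icc 1 (min k (b + 1)),
      ∑ j ∈ Finset.range (min i m + 1), cnt k (b + 1 - i) (m - j) := by
  rw [cnt]
  rw [Finset.sum_attach (PP k (b + 1) m)
    (fun p => cnt k (b + 1 - (p.1 + p.2)) (m - p.2))]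
  rw [Finset.sum_sigma']
  refine Finset.sum_nbij' (fun p => ⟨p.1 + p.2, p.2⟩) (fun x => (x.1 - x.2, x.2))
    ?_ ?_ ?_ ?_ ?_
  · intro p hp
    have h := mem_PP.mp hp
    simp only [Finset.mem_sigma, Finset.mem_Icc, Finset.mem_range]
    omega
  · intro x hx
    simp only [Finset.mem_sigma, Finset.mem_Icc, Finset.mem_range] at hx
    rw [mem_PP]
    simp only
    omega
  · intro p hp
    obtain ⟨u, v⟩ := p
    simp [Nat.add_sub_cancel]
  · intro x hx
    obtain ⟨i, j⟩ := x
    simp only [Finset.mem_sigma, Finset.mem_Icc, Finset.mem_range] at hx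
    have hij : i - j + j = i := by omega
    simp [hij]
  · intro p hp; rfl

/-! ### The power series side -/

noncomputable def Wk (k : ℕ) : PowerSeries (PowerSeries ℚ) :=
  ∑ i ∈ Finset.Icc 1 k, PowerSeries.X ^ i *
    PowerSeries.C (∑ j ∈ Finset.range (i + 1), (PowerSeries.X : PowerSeries ℚ) ^ j)

noncomputable def Gk (k : ℕ) : PowerSeries (PowerSeries ℚ) :=
  PowerSeries.C (PowerSeries.invOfUnit (1 - PowerSeries.X) 1) *
    PowerSeries.invOfUnit (1 - Wk k) 1

lemma constantCoeff_Wk (k : ℕ) : constantCoeff (Wk k) = 0 := by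
  rw [Wk, map_sum]
  refine Finset.sum_eq_zero ?_
  intro i hi
  rw [map_mul, map_pow, constantCoeff_X, zero_pow, zero_mul]
  have := Finset.mem_Icc.mp hi
  omega

lemma coeff_Wk (k i : ℕ) :
    coeff i (Wk k) =
      if 1 ≤ i ∧ i ≤ k then ∑ j ∈ Finset.range (i + 1), (PowerSeries.X : PowerSeries ℚ) ^ j
      else 0 := by
  rw [Wk, map_sum]
  rw [show (if 1 ≤ i ∧ i ≤ k then
      ∑ j ∈ Finset.range (i + 1), (PowerSeries.X : PowerSeries ℚ) ^ j else 0) =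
      if i ∈ Finset.Icc 1 k then
        ∑ j ∈ Finset.range (i + 1), (PowerSeries.X : PowerSeries ℚ) ^ j else 0 by
    simp [Finset.mem_Icc]]
  rw [← Finset.sum_ite_eq' (Finset.Icc 1 k) i
    (fun i' => ∑ j ∈ Finset.range (i' + 1), (PowerSeries.X : PowerSeries ℚ) ^ j)]
  refine Finset.sum_congr rfl ?_
  intro i' _
  rw [mul_comm, coeff_C_mul, coeff_X_pow]
  by_cases h : i = i'
  · subst h; simp
  · simp [h, Ne.symm h]

lemma invOfUnit_one_sub_X :
    PowerSeries.invOfUnit (1 - PowerSeries.X : PowerSeries ℚ) 1 = mk 1 := by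
  have h1 : (1 - PowerSeries.X : PowerSeries ℚ) *
      PowerSeries.invOfUnit (1 - PowerSeries.X) 1 = 1 :=
    mul_invOfUnit _ 1 (by simp)
  have h2 : (mk 1 : PowerSeries ℚ) * (1 - PowerSeries.X) = 1 :=
    mk_one_mul_one_sub_eq_one ℚ
  calc PowerSeries.invOfUnit (1 - PowerSeries.X : PowerSeries ℚ) 1
      = (mk 1 * (1 - PowerSeries.X)) * PowerSeries.invOfUnit (1 - PowerSeries.X) 1 := by
        rw [h2, one_mul]
    _ = mk 1 * ((1 - PowerSeries.X) * PowerSeries.invOfUnit (1 - PowerSeries.X) 1) := by ring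
    _ = mk 1 := by rw [h1, mul_one]

lemma Gk_eq (k : ℕ) :
    Gk k = PowerSeries.C (PowerSeries.invOfUnit (1 - PowerSeries.X) 1)
      + Wk k * Gk k := by
  have hc : constantCoeff (1 - Wk k) = ((1 : (PowerSeries ℚ)ˣ) : PowerSeries ℚ) := by
    rw [map_sub, constantCoeff_Wk]; simp
  have h1 : (1 - Wk k) * PowerSeries.invOfUnit (1 - Wk k) 1 = 1 :=
    mul_invOfUnit _ 1 hc
  have h2 : PowerSeries.invOfUnit (1 - Wk k) 1 =
      1 + Wk k * PowerSeries.invOfUnit (1 - Wk k) 1 := by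
    have := h1
    rw [sub_mul, one_mul] at this
    rw [← sub_eq_iff_eq_add'] at *
    linear_combination this
  conv_lhs => rw [Gk, h2]
  rw [Gk]
  ring

lemma coeff_Gk (k : ℕ) : ∀ b m,
    coeff m (coeff b (Gk k)) = (cnt k b m : ℚ) := by
  intro b
  induction b using Nat.strong_induction_on with
  | _ b ih =>
    intro m
    match b with
    | 0 =>
      have h0 : coeff 0 (Gk k) =
          PowerSeries.invOfUnit (1 - PowerSeries.X) 1 := by
        conv_lhs => rw [Gk_eq k]
        rw [map_add, coeff_C, if_pos rfl, coeff_zero_eq_constantCoeff_apply, map_mul,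
          constantCoeff_Wk, zero_mul, add_zero]
      rw [h0, invOfUnit_one_sub_X, coeff_mk, cnt]
      simp
    | (b + 1) =>
      have hA : coeff (b + 1) (Gk k) =
          ∑ i ∈ Finset.Icc 1 (min k (b + 1)),
            (∑ j ∈ Finset.range (i + 1), (PowerSeries.X : PowerSeries ℚ) ^ j) *
              coeff (b + 1 - i) (Gk k) := by
        conv_lhs => rw [Gk_eq k]
        rw [map_add, coeff_C, if_neg (by omega), zero_add, coeff_mul,
          Finset.Nat.sum_antidiagonal_eq_sum_range_succ_mk]
        have : ∀ i ∈ Finset.range (b + 2),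
            coeff i (Wk k) * coeff (b + 1 - i) (Gk k) =
            if 1 ≤ i ∧ i ≤ k then
              (∑ j ∈ Finset.range (i + 1), (PowerSeries.X : PowerSeries ℚ) ^ j) *
                coeff (b + 1 - i) (Gk k)
            else 0 := by
          intro i _
          rw [coeff_Wk]
          by_cases h : 1 ≤ i ∧ i ≤ k
          · rw [if_pos h, if_pos h]
          · rw [if_neg h, if_neg h, zero_mul]
        rw [Finset.sum_congr rfl this, ← Finset.sum_filter]
        refine Finset.sum_congr ?_ (fun _ _ => rfl)
        ext i
        simp only [Finset.mem_filter, Finset.mem_range, Finset.mem_Icc]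
        omega
      rw [hA, map_sum]
      have hterm : ∀ i ∈ Finset.Icc 1 (min k (b + 1)),
          coeff m ((∑ j ∈ Finset.range (i + 1), (PowerSeries.X : PowerSeries ℚ) ^ j) *
            coeff (b + 1 - i) (Gk k)) =
          ∑ j ∈ Finset.range (min i m + 1), (cnt k (b + 1 - i) (m - j) : ℚ) := by
        intro i hi
        rw [Finset.mem_Icc] at hi
        rw [coeff_mul, Finset.Nat.sum_antidiagonal_eq_sum_range_succ_mk]
        have hc : ∀ j ∈ Finset.range (m + 1),
            coeff j (∑ j' ∈ Finset.range (i + 1), (PowerSeries.X : PowerSeries ℚ) ^ j') *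
              coeff (m - j) (coeff (b + 1 - i) (Gk k)) =
            if j ≤ i then (cnt k (b + 1 - i) (m - j) : ℚ) else 0 := by
          intro j _
          rw [map_sum]
          simp_rw [coeff_X_pow]
          rw [Finset.sum_ite_eq (Finset.range (i + 1)) j (fun _ => (1 : ℚ))]
          rw [ih (b + 1 - i) (by omega) (m - j)]
          by_cases h : j ≤ i
          · rw [if_pos (Finset.mem_range.mpr (by omega)), if_pos h, one_mul]
          · rw [if_neg (by simp only [Finset.mem_range]; omega), if_neg h, zero_mul]
        rw [Finset.sum_congr rfl hc, ← Finset.sum_filter]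
        refine Finset.sum_congr ?_ (fun _ _ => rfl)
        ext j
        simp only [Finset.mem_filter, Finset.mem_range]
        omega
      rw [Finset.sum_congr rfl hterm, cnt_succ]
      push_cast
      rfl

/-- For a positive integer `k`, the number of finite sequences
`((u₁,v₁), …, (u_r,v_r))` of pairs of nonnegative integers with
`1 ≤ uᵢ + vᵢ ≤ k` for each `i`, `v₁ + ⋯ + v_r ≤ k` and
`u₁ + ⋯ + u_r + v₁ + ⋯ + v_r = b` equals the coefficient of `x^b z^k` in
`(1/(1-z)) · 1/(1 - Σ_{i=1}^k x^i Σ_{j=0}^i z^j)`.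
We work in `B⟦x⟧` with `B = ℚ⟦z⟧`; both factors have constant term `1` in `B`
resp. `ℚ`, and their inverses are taken as the geometric-series inverses. -/
theorem card_embeddings_eq_coeff (k b : ℕ) (hk : 0 < k) :
    letI B := PowerSeries ℚ
    letI z : B := PowerSeries.X
    letI W : PowerSeries B :=
      ∑ i ∈ Finset.Icc 1 k, PowerSeries.X ^ i *
        PowerSeries.C (∑ j ∈ Finset.range (i + 1), z ^ j)
    letI G : PowerSeries B :=
      PowerSeries.C (PowerSeries.invOfUnit (1 - z) 1) *
        PowerSeries.invOfUnit (1 - W) 1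
    (Nat.card {l : List (ℕ × ℕ) //
        (∀ p ∈ l, 1 ≤ p.1 + p.2 ∧ p.1 + p.2 ≤ k) ∧
          (l.map Prod.snd).sum ≤ k ∧
          (l.map fun p => p.1 + p.2).sum = b} : ℚ) =
      PowerSeries.coeff k (PowerSeries.coeff b G) := by
  have h : (Nat.card (TT k b k) : ℚ) =
      coeff k (coeff b (Gk k)) := by
    rw [card_TT, coeff_Gk]
  exact h
end

section
/- For each positive integer b, the number of finite sequences ((u_1,v_1), …, (u_r,v_r)) of pairs of nonnegative integers with u_i + v_i ≥ 1 for each i and u_1 + ⋯ + u_r + v_1 + ⋯ + v_r = b (with no bound on the v_i or their sum) equals J(b), where J(0)=1, J(1)=2, J(2)=7, and J(b) = 4J(b-1) - 2J(b-2) for b ≥ 3. -/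
def Emb (b : ℕ) := {l : List (ℕ × ℕ) //
  (∀ p ∈ l, 1 ≤ p.1 + p.2) ∧ (l.map fun p => p.1 + p.2).sum = b}

lemma cons_prop (b k u : ℕ) (hk : k < b) (hu : u < k + 2) (t : List (ℕ × ℕ))
    (ht1 : ∀ p ∈ t, 1 ≤ p.1 + p.2) (ht2 : (t.map fun p => p.1 + p.2).sum = b - 1 - k) :
    (∀ p ∈ ((u, k + 1 - u) :: t), 1 ≤ p.1 + p.2) ∧
      (((u, k + 1 - u) :: t).map fun p => p.1 + p.2).sum = b := by
  constructor
  · intro p hp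
    rw [List.mem_cons] at hp
    rcases hp with rfl | hp
    · dsimp only; omega
    · exact ht1 p hp
  · simp only [List.map_cons, List.sum_cons, ht2]
    omega

def F (b : ℕ) (x : Σ k : Fin b, Fin (k.1 + 2) × Emb (b - 1 - k.1)) : Emb b :=
  ⟨(x.2.1.1, x.1.1 + 1 - x.2.1.1) :: x.2.2.1,
    cons_prop b x.1.1 x.2.1.1 x.1.2 x.2.1.2 x.2.2.1 x.2.2.2.1 x.2.2.2.2⟩

lemma F_inj (b : ℕ) : Function.Injective (F b) := by
  rintro ⟨⟨k, hk⟩, ⟨u, hu⟩, ⟨t, ht⟩⟩ ⟨⟨k', hk'⟩, ⟨u', hu'⟩, ⟨t', ht'⟩⟩ h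
  have h' : _ = _ := congrArg Subtype.val h
  dsimp only [F] at h'
  rw [List.cons.injEq, Prod.mk.injEq] at h'
  obtain ⟨⟨h1, h2⟩, h3⟩ := h'
  simp only [Fin.val_mk] at h1 h2 h3 hu hu'
  have hkk : k = k' := by omega
  subst hkk
  subst h1
  subst h3
  rfl

lemma F_surj (b : ℕ) (hb : 1 ≤ b) : Function.Surjective (F b) := by
  rintro ⟨l, h1, h2⟩
  match l with
  | [] => simp at h2; omega
  | (u, v) :: t =>
    have huv : 1 ≤ u + v := h1 (u, v) (by simp)
    simp only [List.map_cons, List.sum_cons] at h2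
    have hkb : u + v - 1 < b := by omega
    have ht2 : (t.map fun p => p.1 + p.2).sum = b - 1 - (u + v - 1) := by omega
    have hu2 : u < (u + v - 1) + 2 := by omega
    refine ⟨⟨⟨u + v - 1, hkb⟩, ⟨u, hu2⟩,
      ⟨t, fun p hp => h1 p (by simp [hp]), ht2⟩⟩, ?_⟩
    apply Subtype.ext
    dsimp only [F]
    have hv : u + v - 1 + 1 - u = v := by omega
    rw [hv]

lemma F_bij (b : ℕ) (hb : 1 ≤ b) : Function.Bijective (F b) :=
  ⟨F_inj b, F_surj b hb⟩

lemma emb_zero : ∀ x : Emb 0, x = ⟨[], by simp⟩ := by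
  rintro ⟨l, h1, h2⟩
  match l with
  | [] => rfl
  | (u, v) :: t =>
    have := h1 (u, v) (by simp)
    simp only [List.map_cons, List.sum_cons] at h2
    omega

instance : Subsingleton (Emb 0) := ⟨fun a b => (emb_zero a).trans (emb_zero b).symm⟩

lemma finite_emb : ∀ b, Finite (Emb b) := by
  intro b
  induction b using Nat.strong_induction_on with
  | _ b ih =>
    match b, ih with
    | 0, _ => exact Finite.of_subsingleton
    | (b + 1), ih =>
      haveI : ∀ k : Fin (b + 1), Finite (Emb (b + 1 - 1 - k.1)) :=
        fun k => ih _ (by omega)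
      exact Finite.of_surjective (F (b + 1)) (F_surj (b + 1) (by omega))

lemma card_zero : Nat.card (Emb 0) = 1 := by
  haveI := finite_emb 0
  rw [Nat.card_eq_one_iff_unique]
  exact ⟨inferInstance, ⟨⟨[], by simp⟩⟩⟩

lemma card_rec (b : ℕ) (hb : 1 ≤ b) :
    Nat.card (Emb b) = ∑ k ∈ Finset.range b, (k + 2) * Nat.card (Emb (b - 1 - k)) := by
  haveI : ∀ m, Finite (Emb m) := finite_emb
  haveI : ∀ m, Fintype (Emb m) := fun m => Fintype.ofFinite _
  rw [← Nat.card_eq_of_bijective (F b) (F_bij b hb)]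
  rw [Nat.card_eq_fintype_card, Fintype.card_sigma]
  rw [Fin.sum_univ_eq_sum_range (fun k => Fintype.card (Fin (k + 2) × Emb (b - 1 - k)))]
  refine Finset.sum_congr rfl fun k _ => ?_
  rw [Fintype.card_prod, Fintype.card_fin, Nat.card_eq_fintype_card]

noncomputable def nn (b : ℕ) : ℤ := (Nat.card (Emb b) : ℤ)

lemma nn_zero : nn 0 = 1 := by simp [nn, card_zero]

lemma nn_rec (b : ℕ) (hb : 1 ≤ b) :
    nn b = ∑ m ∈ Finset.range b, ((b + 1 - m : ℕ) : ℤ) * nn m := by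
  rw [← Finset.sum_range_reflect (fun m => ((b + 1 - m : ℕ) : ℤ) * nn m) b]
  rw [nn, card_rec b hb]
  push_cast
  refine Finset.sum_congr rfl fun k hk => ?_
  rw [Finset.mem_range] at hk
  have h1 : b + 1 - (b - 1 - k) = k + 2 := by omega
  rw [h1, nn]
  push_cast
  ring

lemma nn_step (m : ℕ) :
    nn (m + 2) = 3 * nn (m + 1) + ∑ j ∈ Finset.range (m + 1), nn j := by
  have h2 := nn_rec (m + 2) (by omega)
  have h1 := nn_rec (m + 1) (by omega)
  rw [Finset.sum_range_succ] at h2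
  have hc : ((m + 2 + 1 - (m + 1) : ℕ) : ℤ) = 2 := by
    norm_num
  rw [hc] at h2
  have hsum : ∑ m_1 ∈ Finset.range (m + 1), ((m + 2 + 1 - m_1 : ℕ) : ℤ) * nn m_1
      = (∑ m_1 ∈ Finset.range (m + 1), ((m + 1 + 1 - m_1 : ℕ) : ℤ) * nn m_1)
        + ∑ j ∈ Finset.range (m + 1), nn j := by
    rw [← Finset.sum_add_distrib]
    refine Finset.sum_congr rfl fun j hj => ?_
    rw [Finset.mem_range] at hj
    have : ((m + 2 + 1 - j : ℕ) : ℤ) = ((m + 1 + 1 - j : ℕ) : ℤ) + 1 := by omega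
    rw [this]; ring
  rw [hsum, ← h1] at h2
  linarith

lemma nn_lin (m : ℕ) : nn (m + 3) = 4 * nn (m + 2) - 2 * nn (m + 1) := by
  have h3 := nn_step (m + 1)
  have h2 := nn_step m
  rw [Finset.sum_range_succ] at h3
  have : m + 1 + 2 = m + 3 := by omega
  rw [this] at h3
  linarith

lemma nn_one : nn 1 = 2 := by
  have := nn_rec 1 (by omega)
  rw [Finset.sum_range_one] at this
  rw [this, nn_zero]
  norm_num

lemma nn_two : nn 2 = 7 := by
  have := nn_step 0
  rw [Finset.sum_range_one] at this
  rw [this, nn_zero, nn_one]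
  norm_num


/-- For `b ≥ 1`, the number of finite sequences `((u₁,v₁), …, (u_r,v_r))` of
pairs of nonnegative integers with `uᵢ + vᵢ ≥ 1` for each `i` and total sum
`u₁ + ⋯ + u_r + v₁ + ⋯ + v_r = b` equals `J(b)`, where `J(0) = 1`, `J(1) = 2`,
`J(2) = 7` and `J(b) = 4J(b-1) - 2J(b-2)` for `b ≥ 3`. -/
theorem card_unbounded_embeddings (J : ℕ → ℤ) (h0 : J 0 = 1) (h1 : J 1 = 2)
    (h2 : J 2 = 7) (hrec : ∀ b, 3 ≤ b → J b = 4 * J (b - 1) - 2 * J (b - 2)) :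
    ∀ b : ℕ, 1 ≤ b →
      (Nat.card {l : List (ℕ × ℕ) //
          (∀ p ∈ l, 1 ≤ p.1 + p.2) ∧
            (l.map fun p => p.1 + p.2).sum = b} : ℤ) = J b := by
  have key : ∀ b : ℕ, 1 ≤ b → nn b = J b ∧ nn (b + 1) = J (b + 1) := by
    intro b hb
    induction b, hb using Nat.le_induction with
    | base => exact ⟨by rw [nn_one, h1], by rw [nn_two, h2]⟩
    | succ b hb ih =>
      refine ⟨ih.2, ?_⟩
      have hr := hrec (b + 2) (by omega)
      have e1 : b + 2 - 1 = b + 1 := by omega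
      have e2 : b + 2 - 2 = b := by omega
      rw [e1, e2] at hr
      have : b + 1 + 1 = b + 2 := by omega
      rw [this, hr, ← ih.1, ← ih.2]
      have := nn_lin (b - 1)
      have hb1 : b - 1 + 3 = b + 2 := by omega
      have hb2 : b - 1 + 2 = b + 1 := by omega
      have hb3 : b - 1 + 1 = b := by omega
      rw [hb1, hb2, hb3] at this
      exact this
  intro b hb
  exact (key b hb).1
end
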